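/- arXiv:1810.08351 — 3 statements merged into one kernel-verified Lean document; each statement's English description precedes it below -/
import Mathlib

section
/- Let W₁ ∈ ℝ^{n₁×n₀}, W₂ ∈ ℝ^{n₂×n₁}, W₃ ∈ ℝ^{n₃×n₂} be mutually independent random matrices, each with independent and identically distributed entries. Let g = (g₁, g₂, g₃) be a measurable map on triples of matrices of these shapes such that for all permutation matrices P₁ (n₁×n₁) and P₂ (n₂×n₂) and all triples (X₁,X₂,X₃): g₁(P₁X₁, P₂X₂P₁ᵀ, X₃P₂ᵀ) = P₁ g₁(X₁,X₂,X₃), g₂(P₁X₁, P₂X₂P₁ᵀ, X₃P₂ᵀ) = P₂ g₂(X₁,X₂,X₃) P₁ᵀ, and g₃(P₁X₁, P₂X₂P₁ᵀ, X₃P₂ᵀ) = g₃(X₁,X₂,X₃) P₂ᵀ. Write (W₁ᵗ, W₂ᵗ, W₃ᵗ) = gᵗ(W₁,W₂,W₃) for the t-fold iterate. Then for every t ≥ 0 and all permutation matrices P₁, P₂, the triple (P₁W₁ᵗ, P₂W₂ᵗP₁ᵀ, W₃ᵗP₂ᵀ) has the same joint distribution as (W₁ᵗ, W₂ᵗ,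 W₃ᵗ); in particular P₂W₂ᵗP₁ᵀ has the same distribution as W₂ᵗ (W₂ᵗ is row-and-column exchangeable), P₁W₁ᵗ has the same distribution as W₁ᵗ (W₁ᵗ is row exchangeable), and W₃ᵗP₂ᵀ has the same distribution as W₃ᵗ (W₃ᵗ is column exchangeable). -/
open MeasureTheory ProbabilityTheory Matrix

/-- Matrices carry the product (entrywise) measurable structure. -/
instance matrixMeasurableSpace {m n α : Type*} [MeasurableSpace α] :
    MeasurableSpace (Matrix m n α) :=
  inferInstanceAs (MeasurableSpace (m → n → α))

/-- A permutation matrix: a square 0-1 matrix with exactly one 1 in each row and in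
each column. -/
def IsPermMatrix {n : ℕ} (P : Matrix (Fin n) (Fin n) ℝ) : Prop :=
  (∀ i j, P i j = 0 ∨ P i j = 1) ∧ (∀ i, ∃! j, P i j = 1) ∧ (∀ j, ∃! i, P i j = 1)

section Aux

variable {Ω : Type*} [MeasurableSpace Ω] {P : Measure Ω} [IsProbabilityMeasure P]

/-- The joint law of finitely many independent random variables is the product of
their laws. -/
lemma aux_map_eq_pi {ι : Type*} [Fintype ι] (X : ι → Ω → ℝ)
    (hX : ∀ i, Measurable (X i))
    (hInd : iIndepFun X P) :
    Measure.map (fun ω i => X i ω) P = Measure.pi (fun i => Measure.map (X i) P) := by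
  have hmeas : Measurable (fun ω i => X i ω) := measurable_pi_lambda _ hX
  haveI : ∀ i, IsProbabilityMeasure (Measure.map (X i) P) :=
    fun i => Measure.isProbabilityMeasure_map (hX i).aemeasurable
  refine (Measure.pi_eq fun s hs => ?_).symm
  rw [Measure.map_apply hmeas (MeasurableSet.univ_pi hs)]
  have hpre : (fun ω i => X i ω) ⁻¹' Set.univ.pi s = ⋂ i ∈ Finset.univ, X i ⁻¹' s i := by
    ext ω; simp [Set.mem_pi]
  rw [hpre, hInd.measure_inter_preimage_eq_mul Finset.univ (fun i _ => hs i)]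
  exact Finset.prod_congr rfl fun i _ => (Measure.map_apply (hX i) (hs i)).symm

/-- The joint law of finitely many iid random variables is invariant under
permutations of the index set. -/
lemma aux_perm_invariant {ι : Type*} [Fintype ι] (X : ι → Ω → ℝ)
    (hX : ∀ i, Measurable (X i))
    (hInd : iIndepFun X P)
    (hId : ∀ i j, Measure.map (X i) P = Measure.map (X j) P)
    (e : ι ≃ ι) :
    Measure.map (fun ω i => X (e i) ω) P = Measure.map (fun ω i => X i ω) P := by
  haveI : ∀ i, IsProbabilityMeasure (Measure.map (X i) P) :=
    fun i => Measure.isProbabilityMeasure_map (hX i).aemeasurable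
  have h1 := aux_map_eq_pi X hX hInd
  have h2 := (measurePreserving_piCongrLeft
    (α := fun _ : ι => ℝ) (μ := fun i => Measure.map (X i) P) e.symm).map_eq
  have h3 : (fun i' => Measure.map (X (e.symm i')) P) = fun i => Measure.map (X i) P :=
    funext fun i => hId _ _
  rw [h3] at h2
  have hcomp : (fun ω i => X (e i) ω)
      = (⇑(MeasurableEquiv.piCongrLeft (fun _ : ι => ℝ) e.symm)) ∘ (fun ω i => X i ω) := by
    funext ω
    funext i
    show X (e i) ω = (MeasurableEquiv.piCongrLeft (fun _ : ι => ℝ) e.symm) (fun i => X i ω) i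
    have := MeasurableEquiv.piCongrLeft_apply_apply (β := fun _ : ι => ℝ) e.symm
      (fun i => X i ω) (e i)
    rw [e.symm_apply_apply] at this
    exact this.symm
  rw [hcomp, ← Measure.map_map (MeasurableEquiv.piCongrLeft (fun _ : ι => ℝ) e.symm).measurable
    (measurable_pi_lambda _ hX), h1, h2]

/-- The law of a matrix with iid entries is invariant under permutations of entries. -/
lemma aux_matrix_perm {m n : Type*} [Fintype m] [Fintype n]
    (W : Ω → Matrix m n ℝ) (hW : Measurable W)
    (hInd : iIndepFun
      (fun p : m × n => fun ω => W ω p.1 p.2) P)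
    (hId : ∀ p q : m × n,
      Measure.map (fun ω => W ω p.1 p.2) P = Measure.map (fun ω => W ω q.1 q.2) P)
    (e : (m × n) ≃ (m × n)) :
    Measure.map (fun ω => (fun i j => W ω (e (i, j)).1 (e (i, j)).2 : Matrix m n ℝ)) P
      = Measure.map W P := by
  set X : m × n → Ω → ℝ := fun p ω => W ω p.1 p.2 with hXdef
  have hX : ∀ p, Measurable (X p) := fun p =>
    (measurable_pi_apply p.2).comp ((measurable_pi_apply p.1).comp hW)
  set C : (m × n → ℝ) → Matrix m n ℝ := fun g i j => g (i, j) with hCdef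
  have hC : Measurable C :=
    measurable_pi_lambda _ fun i => measurable_pi_lambda _ fun j => measurable_pi_apply (i, j)
  have hA : Measurable (fun ω (p : m × n) => X p ω) := measurable_pi_lambda _ hX
  have hA' : Measurable (fun ω (p : m × n) => X (e p) ω) :=
    measurable_pi_lambda _ fun p => hX (e p)
  have key := aux_perm_invariant X hX hInd (fun p q => hId p q) e
  have e1 : (fun ω => (fun i j => W ω (e (i, j)).1 (e (i, j)).2 : Matrix m n ℝ))
      = C ∘ (fun ω (p : m × n) => X (e p) ω) := rfl
  have e2 : W = C ∘ (fun ω (p : m × n) => X p ω) := rfl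
  rw [e1]
  calc _ = Measure.map C (Measure.map (fun ω (p : m × n) => X (e p) ω) P) :=
        (Measure.map_map hC hA').symm
    _ = _ := by rw [key, Measure.map_map hC hA, ← e2]

end Aux

/-- A permutation matrix is given by a permutation. -/
lemma isPermMatrix_exists {n : ℕ} {Q : Matrix (Fin n) (Fin n) ℝ} (hQ : IsPermMatrix Q) :
    ∃ f : Equiv.Perm (Fin n), ∀ i j, Q i j = if j = f i then 1 else 0 := by
  obtain ⟨h01, hrow, hcol⟩ := hQ
  choose f0 hf0 hf0u using hrow
  have hinj : Function.Injective f0 := by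
    intro i i' h
    obtain ⟨c, hc, hcu⟩ := hcol (f0 i)
    have h1 := hcu i (hf0 i)
    have h2 := hcu i' (by show Q i' (f0 i) = 1; rw [h]; exact hf0 i')
    rw [h1, h2]
  refine ⟨Equiv.ofBijective f0 (Finite.injective_iff_bijective.mp hinj), fun i j => ?_⟩
  simp only [Equiv.ofBijective_apply]
  by_cases h : j = f0 i
  · subst h; simp [hf0 i]
  · simp only [h, if_false]
    rcases h01 i j with h0 | h1
    · exact h0
    · exact absurd (hf0u i j h1) h

lemma permMatrix_mul_left {n m : ℕ} {Q : Matrix (Fin n) (Fin n) ℝ} {f : Equiv.Perm (Fin n)}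
    (hf : ∀ i j, Q i j = if j = f i then 1 else 0) (X : Matrix (Fin n) (Fin m) ℝ) :
    Q * X = fun i j => X (f i) j := by
  funext i j
  show (Q * X) i j = _
  simp only [Matrix.mul_apply, hf]
  simp [Finset.sum_ite_eq' Finset.univ (f i) (fun k => X k j)]

lemma permMatrix_mul_right {n m : ℕ} {Q : Matrix (Fin n) (Fin n) ℝ} {f : Equiv.Perm (Fin n)}
    (hf : ∀ i j, Q i j = if j = f i then 1 else 0) (X : Matrix (Fin m) (Fin n) ℝ) :
    X * Qᵀ = fun i j => X i (f j) := by
  funext i j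
  show (X * Qᵀ) i j = _
  simp only [Matrix.mul_apply, Matrix.transpose_apply, hf]
  simp [Finset.sum_ite_eq' Finset.univ (f j) (fun k => X i k), mul_ite]

lemma measurable_matrix_mulLeft {a b c : ℕ} (A : Matrix (Fin a) (Fin b) ℝ) :
    Measurable (fun X : Matrix (Fin b) (Fin c) ℝ => A * X) := by
  refine measurable_pi_lambda _ fun i => measurable_pi_lambda _ fun j => ?_
  simp only [Matrix.mul_apply]
  exact Finset.measurable_sum _ fun k _ =>
    measurable_const.mul ((measurable_pi_apply j).comp (measurable_pi_apply k))

lemma measurable_matrix_mulRight {a b c : ℕ} (B : Matrix (Fin b) (Fin c) ℝ) :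
    Measurable (fun X : Matrix (Fin a) (Fin b) ℝ => X * B) := by
  refine measurable_pi_lambda _ fun i => measurable_pi_lambda _ fun j => ?_
  simp only [Matrix.mul_apply]
  exact Finset.measurable_sum _ fun k _ =>
    ((measurable_pi_apply k).comp (measurable_pi_apply i)).mul_const _

/-- If the initial weight matrices are mutually independent with IID entries and the
update rule `g` commutes with permutations of the hidden neurons, then at every
iteration `t` the triple `(P₁W₁ᵗ, P₂W₂ᵗP₁ᵀ, W₃ᵗP₂ᵀ)` has the same joint distribution as
`(W₁ᵗ, W₂ᵗ, W₃ᵗ)`; in particular `W₂ᵗ` is row-and-column exchangeable, `W₁ᵗ` is row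
exchangeable and `W₃ᵗ` is column exchangeable. -/
theorem trained_weights_exchangeable {Ω : Type*} [MeasurableSpace Ω] (P : Measure Ω)
    [IsProbabilityMeasure P] {n₀ n₁ n₂ n₃ : ℕ}
    (W₁ : Ω → Matrix (Fin n₁) (Fin n₀) ℝ) (W₂ : Ω → Matrix (Fin n₂) (Fin n₁) ℝ)
    (W₃ : Ω → Matrix (Fin n₃) (Fin n₂) ℝ)
    (hW₁ : Measurable W₁) (hW₂ : Measurable W₂) (hW₃ : Measurable W₃)
    -- the entries within each initial matrix are mutually independent
    (hInd₁ : iIndepFun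
      (fun p : Fin n₁ × Fin n₀ => fun ω => W₁ ω p.1 p.2) P)
    (hInd₂ : iIndepFun
      (fun p : Fin n₂ × Fin n₁ => fun ω => W₂ ω p.1 p.2) P)
    (hInd₃ : iIndepFun
      (fun p : Fin n₃ × Fin n₂ => fun ω => W₃ ω p.1 p.2) P)
    -- the entries within each initial matrix are identically distributed
    (hId₁ : ∀ p q : Fin n₁ × Fin n₀,
      Measure.map (fun ω => W₁ ω p.1 p.2) P = Measure.map (fun ω => W₁ ω q.1 q.2) P)
    (hId₂ : ∀ p q : Fin n₂ × Fin n₁,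
      Measure.map (fun ω => W₂ ω p.1 p.2) P = Measure.map (fun ω => W₂ ω q.1 q.2) P)
    (hId₃ : ∀ p q : Fin n₃ × Fin n₂,
      Measure.map (fun ω => W₃ ω p.1 p.2) P = Measure.map (fun ω => W₃ ω q.1 q.2) P)
    -- the three initial matrices are mutually independent
    (hIndep : Measure.map (fun ω => (W₁ ω, W₂ ω, W₃ ω)) P
      = (Measure.map W₁ P).prod ((Measure.map W₂ P).prod (Measure.map W₃ P)))
    -- the measurable update rule and its permutation equivariance
    (g : Matrix (Fin n₁) (Fin n₀) ℝ × Matrix (Fin n₂) (Fin n₁) ℝ × Matrix (Fin n₃) (Fin n₂) ℝ →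
      Matrix (Fin n₁) (Fin n₀) ℝ × Matrix (Fin n₂) (Fin n₁) ℝ × Matrix (Fin n₃) (Fin n₂) ℝ)
    (hg : Measurable g)
    (hequiv : ∀ P₁ : Matrix (Fin n₁) (Fin n₁) ℝ, ∀ P₂ : Matrix (Fin n₂) (Fin n₂) ℝ,
      IsPermMatrix P₁ → IsPermMatrix P₂ →
      ∀ X : Matrix (Fin n₁) (Fin n₀) ℝ × Matrix (Fin n₂) (Fin n₁) ℝ ×
            Matrix (Fin n₃) (Fin n₂) ℝ,
        (g (P₁ * X.1, P₂ * X.2.1 * P₁ᵀ, X.2.2 * P₂ᵀ)).1 = P₁ * (g X).1 ∧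
        (g (P₁ * X.1, P₂ * X.2.1 * P₁ᵀ, X.2.2 * P₂ᵀ)).2.1 = P₂ * (g X).2.1 * P₁ᵀ ∧
        (g (P₁ * X.1, P₂ * X.2.1 * P₁ᵀ, X.2.2 * P₂ᵀ)).2.2 = (g X).2.2 * P₂ᵀ) :
    ∀ t : ℕ, ∀ P₁ : Matrix (Fin n₁) (Fin n₁) ℝ, ∀ P₂ : Matrix (Fin n₂) (Fin n₂) ℝ,
      IsPermMatrix P₁ → IsPermMatrix P₂ →
      (Measure.map (fun ω =>
          (P₁ * (g^[t] (W₁ ω, W₂ ω, W₃ ω)).1,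
           P₂ * (g^[t] (W₁ ω, W₂ ω, W₃ ω)).2.1 * P₁ᵀ,
           (g^[t] (W₁ ω, W₂ ω, W₃ ω)).2.2 * P₂ᵀ)) P
        = Measure.map (fun ω => g^[t] (W₁ ω, W₂ ω, W₃ ω)) P) ∧
      (Measure.map (fun ω => P₂ * (g^[t] (W₁ ω, W₂ ω, W₃ ω)).2.1 * P₁ᵀ) P
        = Measure.map (fun ω => (g^[t] (W₁ ω, W₂ ω, W₃ ω)).2.1) P) ∧
      (Measure.map (fun ω => P₁ * (g^[t] (W₁ ω, W₂ ω, W₃ ω)).1) P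
        = Measure.map (fun ω => (g^[t] (W₁ ω, W₂ ω, W₃ ω)).1) P) ∧
      (Measure.map (fun ω => (g^[t] (W₁ ω, W₂ ω, W₃ ω)).2.2 * P₂ᵀ) P
        = Measure.map (fun ω => (g^[t] (W₁ ω, W₂ ω, W₃ ω)).2.2) P) := by
  have hWtriple : Measurable fun ω => (W₁ ω, W₂ ω, W₃ ω) := hW₁.prodMk (hW₂.prodMk hW₃)
  have hFmeas : ∀ t, Measurable (fun ω => g^[t] (W₁ ω, W₂ ω, W₃ ω)) :=
    fun t => (hg.iterate t).comp hWtriple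
  haveI : IsProbabilityMeasure (Measure.map W₁ P) := Measure.isProbabilityMeasure_map hW₁.aemeasurable
  haveI : IsProbabilityMeasure (Measure.map W₂ P) := Measure.isProbabilityMeasure_map hW₂.aemeasurable
  haveI : IsProbabilityMeasure (Measure.map W₃ P) := Measure.isProbabilityMeasure_map hW₃.aemeasurable
  have main : ∀ t : ℕ, ∀ P₁ : Matrix (Fin n₁) (Fin n₁) ℝ, ∀ P₂ : Matrix (Fin n₂) (Fin n₂) ℝ,
      IsPermMatrix P₁ → IsPermMatrix P₂ →
      Measure.map (fun ω =>
          (P₁ * (g^[t] (W₁ ω, W₂ ω, W₃ ω)).1,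
           P₂ * (g^[t] (W₁ ω, W₂ ω, W₃ ω)).2.1 * P₁ᵀ,
           (g^[t] (W₁ ω, W₂ ω, W₃ ω)).2.2 * P₂ᵀ)) P
        = Measure.map (fun ω => g^[t] (W₁ ω, W₂ ω, W₃ ω)) P := by
    intro t
    induction t with
    | zero =>
      intro P₁ P₂ h₁ h₂
      simp only [Function.iterate_zero, id_eq]
      obtain ⟨f₁, hf₁⟩ := isPermMatrix_exists h₁
      obtain ⟨f₂, hf₂⟩ := isPermMatrix_exists h₂
      set T₁ : Matrix (Fin n₁) (Fin n₀) ℝ → Matrix (Fin n₁) (Fin n₀) ℝ :=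
        fun X i j => X (f₁ i) j with hT₁def
      set T₂ : Matrix (Fin n₂) (Fin n₁) ℝ → Matrix (Fin n₂) (Fin n₁) ℝ :=
        fun X i j => X (f₂ i) (f₁ j) with hT₂def
      set T₃ : Matrix (Fin n₃) (Fin n₂) ℝ → Matrix (Fin n₃) (Fin n₂) ℝ :=
        fun X i j => X i (f₂ j) with hT₃def
      have hT₁ : Measurable T₁ := measurable_pi_lambda _ fun i =>
        measurable_pi_lambda _ fun j => (measurable_pi_apply j).comp (measurable_pi_apply (f₁ i))
      have hT₂ : Measurable T₂ := measurable_pi_lambda _ fun i =>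
        measurable_pi_lambda _ fun j =>
          (measurable_pi_apply (f₁ j)).comp (measurable_pi_apply (f₂ i))
      have hT₃ : Measurable T₃ := measurable_pi_lambda _ fun i =>
        measurable_pi_lambda _ fun j => (measurable_pi_apply (f₂ j)).comp (measurable_pi_apply i)
      have hfun : (fun ω => (P₁ * W₁ ω, P₂ * W₂ ω * P₁ᵀ, W₃ ω * P₂ᵀ))
          = (Prod.map T₁ (Prod.map T₂ T₃)) ∘ (fun ω => (W₁ ω, W₂ ω, W₃ ω)) := by
        funext ω
        refine Prod.ext (permMatrix_mul_left hf₁ _) (Prod.ext ?_ (permMatrix_mul_right hf₂ _))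
        show P₂ * W₂ ω * P₁ᵀ = T₂ (W₂ ω)
        rw [permMatrix_mul_left hf₂ (W₂ ω)]
        exact permMatrix_mul_right hf₁ ((fun i j => W₂ ω (f₂ i) j : Matrix (Fin n₂) (Fin n₁) ℝ))
      have m₁ : Measure.map T₁ (Measure.map W₁ P) = Measure.map W₁ P := by
        rw [Measure.map_map hT₁ hW₁]
        exact aux_matrix_perm W₁ hW₁ hInd₁ hId₁ (Equiv.prodCongr f₁ (Equiv.refl (Fin n₀)))
      have m₂ : Measure.map T₂ (Measure.map W₂ P) = Measure.map W₂ P := by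
        rw [Measure.map_map hT₂ hW₂]
        exact aux_matrix_perm W₂ hW₂ hInd₂ hId₂ (Equiv.prodCongr f₂ f₁)
      have m₃ : Measure.map T₃ (Measure.map W₃ P) = Measure.map W₃ P := by
        rw [Measure.map_map hT₃ hW₃]
        exact aux_matrix_perm W₃ hW₃ hInd₃ hId₃ (Equiv.prodCongr (Equiv.refl (Fin n₃)) f₂)
      rw [hfun, ← Measure.map_map (hT₁.prodMap (hT₂.prodMap hT₃)) hWtriple, hIndep,
        ← Measure.map_prod_map _ _ hT₁ (hT₂.prodMap hT₃),
        ← Measure.map_prod_map _ _ hT₂ hT₃, m₁, m₂, m₃]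
    | succ t ih =>
      intro P₁ P₂ h₁ h₂
      have hTt : Measurable (fun ω =>
          (P₁ * (g^[t] (W₁ ω, W₂ ω, W₃ ω)).1,
           P₂ * (g^[t] (W₁ ω, W₂ ω, W₃ ω)).2.1 * P₁ᵀ,
           (g^[t] (W₁ ω, W₂ ω, W₃ ω)).2.2 * P₂ᵀ)) := by
        refine Measurable.prodMk ?_ (Measurable.prodMk ?_ ?_)
        · exact (measurable_matrix_mulLeft P₁).comp (measurable_fst.comp (hFmeas t))
        · exact (measurable_matrix_mulRight P₁ᵀ).comp ((measurable_matrix_mulLeft P₂).comp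
            (measurable_fst.comp (measurable_snd.comp (hFmeas t))))
        · exact (measurable_matrix_mulRight P₂ᵀ).comp
            (measurable_snd.comp (measurable_snd.comp (hFmeas t)))
      have hstep : (fun ω =>
          (P₁ * (g^[t + 1] (W₁ ω, W₂ ω, W₃ ω)).1,
           P₂ * (g^[t + 1] (W₁ ω, W₂ ω, W₃ ω)).2.1 * P₁ᵀ,
           (g^[t + 1] (W₁ ω, W₂ ω, W₃ ω)).2.2 * P₂ᵀ))
          = g ∘ (fun ω =>
          (P₁ * (g^[t] (W₁ ω, W₂ ω, W₃ ω)).1,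
           P₂ * (g^[t] (W₁ ω, W₂ ω, W₃ ω)).2.1 * P₁ᵀ,
           (g^[t] (W₁ ω, W₂ ω, W₃ ω)).2.2 * P₂ᵀ)) := by
        funext ω
        obtain ⟨a, b, c⟩ := hequiv P₁ P₂ h₁ h₂ (g^[t] (W₁ ω, W₂ ω, W₃ ω))
        rw [Function.iterate_succ_apply' g t (W₁ ω, W₂ ω, W₃ ω)]
        exact Prod.ext a.symm (Prod.ext b.symm c.symm)
      have hlast : g ∘ (fun ω => g^[t] (W₁ ω, W₂ ω, W₃ ω))
          = fun ω => g^[t + 1] (W₁ ω, W₂ ω, W₃ ω) :=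
        funext fun ω => (Function.iterate_succ_apply' g t _).symm
      rw [hstep, ← Measure.map_map hg hTt, ih P₁ P₂ h₁ h₂, Measure.map_map hg (hFmeas t), hlast]
  intro t P₁ P₂ h₁ h₂
  have H := main t P₁ P₂ h₁ h₂
  have hTt : Measurable (fun ω =>
      (P₁ * (g^[t] (W₁ ω, W₂ ω, W₃ ω)).1,
       P₂ * (g^[t] (W₁ ω, W₂ ω, W₃ ω)).2.1 * P₁ᵀ,
       (g^[t] (W₁ ω, W₂ ω, W₃ ω)).2.2 * P₂ᵀ)) := by
    refine Measurable.prodMk ?_ (Measurable.prodMk ?_ ?_)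
    · exact (measurable_matrix_mulLeft P₁).comp (measurable_fst.comp (hFmeas t))
    · exact (measurable_matrix_mulRight P₁ᵀ).comp ((measurable_matrix_mulLeft P₂).comp
        (measurable_fst.comp (measurable_snd.comp (hFmeas t))))
    · exact (measurable_matrix_mulRight P₂ᵀ).comp
        (measurable_snd.comp (measurable_snd.comp (hFmeas t)))
  refine ⟨H, ?_, ?_, ?_⟩
  · have h21 : Measurable (fun x : Matrix (Fin n₁) (Fin n₀) ℝ ×
        Matrix (Fin n₂) (Fin n₁) ℝ × Matrix (Fin n₃) (Fin n₂) ℝ => x.2.1) :=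
      measurable_fst.comp measurable_snd
    have := congrArg (Measure.map (fun x : Matrix (Fin n₁) (Fin n₀) ℝ ×
        Matrix (Fin n₂) (Fin n₁) ℝ × Matrix (Fin n₃) (Fin n₂) ℝ => x.2.1)) H
    rwa [Measure.map_map h21 hTt, Measure.map_map h21 (hFmeas t)] at this
  · have h1 : Measurable (fun x : Matrix (Fin n₁) (Fin n₀) ℝ ×
        Matrix (Fin n₂) (Fin n₁) ℝ × Matrix (Fin n₃) (Fin n₂) ℝ => x.1) := measurable_fst
    have := congrArg (Measure.map (fun x : Matrix (Fin n₁) (Fin n₀) ℝ ×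
        Matrix (Fin n₂) (Fin n₁) ℝ × Matrix (Fin n₃) (Fin n₂) ℝ => x.1)) H
    rwa [Measure.map_map h1 hTt, Measure.map_map h1 (hFmeas t)] at this
  · have h22 : Measurable (fun x : Matrix (Fin n₁) (Fin n₀) ℝ ×
        Matrix (Fin n₂) (Fin n₁) ℝ × Matrix (Fin n₃) (Fin n₂) ℝ => x.2.2) :=
      measurable_snd.comp measurable_snd
    have := congrArg (Measure.map (fun x : Matrix (Fin n₁) (Fin n₀) ℝ ×
        Matrix (Fin n₂) (Fin n₁) ℝ × Matrix (Fin n₃) (Fin n₂) ℝ => x.2.2)) H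
    rwa [Measure.map_map h22 hTt, Measure.map_map h22 (hFmeas t)] at this
end

section
/- Let θ ∈ [0, π] and let (Z_x, Z_y) be a centered bivariate Gaussian vector with E[Z_x²] = E[Z_y²] = 1 and E[Z_x Z_y] = cos θ. Then E[σ(Z_x) σ(Z_y)] = (1/(2π)) (sin θ + (π − θ) cos θ). -/
open MeasureTheory ProbabilityTheory Real Set
open scoped ENNReal NNReal

/-- The ReLU activation. -/
noncomputable def relu (z : ℝ) : ℝ := max 0 z

/-- The centered bivariate Gaussian measure on `ℝ²` with unit variances and covariance
`cos θ`, realized as the law of `(Z₁, cos θ · Z₁ + sin θ · Z₂)` for independent standard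
Gaussians `Z₁, Z₂` (for `θ ∈ [0, π]`). -/
noncomputable def stdBivariateGaussian (θ : ℝ) : Measure (ℝ × ℝ) :=
  Measure.map (fun p : ℝ × ℝ => (p.1, Real.cos θ * p.1 + Real.sin θ * p.2))
    ((gaussianReal 0 1).prod (gaussianReal 0 1))

lemma continuous_relu : Continuous relu := continuous_const.max continuous_id

lemma relu_const_mul (r a : ℝ) (hr : 0 ≤ r) : relu (r * a) = r * relu a := by
  unfold relu
  rw [mul_max_of_nonneg _ _ hr, mul_zero]

lemma relu_radial : ∫ r in Ioi (0:ℝ), r ^ 3 * Real.exp (-r ^ 2 / 2) = 2 := by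
  have hderiv : ∀ x ∈ Ioi (0:ℝ),
      HasDerivAt (fun r : ℝ => -(r ^ 2 + 2) * Real.exp (-r ^ 2 / 2))
        (x ^ 3 * Real.exp (-x ^ 2 / 2)) x := by
    intro x _
    have hx2 : HasDerivAt (fun r : ℝ => r ^ 2) (2 * x) x := by
      simpa using hasDerivAt_pow 2 x
    have hexp : HasDerivAt (fun r : ℝ => Real.exp (-r ^ 2 / 2))
        (Real.exp (-x ^ 2 / 2) * (-(2 * x) / 2)) x :=
      (Real.hasDerivAt_exp _).comp x ((hx2.neg).div_const 2)
    have hpoly : HasDerivAt (fun r : ℝ => -(r ^ 2 + 2)) (-(2 * x)) x := (hx2.add_const 2).neg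
    have := hpoly.mul hexp
    refine this.congr_deriv ?_
    ring
  have hcont : ContinuousWithinAt (fun r : ℝ => -(r ^ 2 + 2) * Real.exp (-r ^ 2 / 2)) (Ici 0) 0 :=
    (Continuous.continuousWithinAt (by continuity))
  have hpos : ∀ x ∈ Ioi (0:ℝ), 0 ≤ x ^ 3 * Real.exp (-x ^ 2 / 2) := fun x hx =>
    mul_nonneg (pow_nonneg (le_of_lt hx) 3) (Real.exp_nonneg _)
  have htend : Filter.Tendsto (fun r : ℝ => -(r ^ 2 + 2) * Real.exp (-r ^ 2 / 2))
      Filter.atTop (nhds 0) := by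
    have h1 : Filter.Tendsto (fun u : ℝ => -((2 * (u * Real.exp (-u)) + 2 * Real.exp (-u))))
        Filter.atTop (nhds (-(2 * 0 + 2 * 0))) := by
      apply Filter.Tendsto.neg
      apply Filter.Tendsto.add
      · exact (tendsto_const_nhds.mul (by simpa using tendsto_pow_mul_exp_neg_atTop_nhds_zero 1))
      · exact tendsto_const_nhds.mul (Real.tendsto_exp_neg_atTop_nhds_zero)
    have hcomp : Filter.Tendsto (fun r : ℝ => r ^ 2 / 2) Filter.atTop Filter.atTop :=
      (Filter.tendsto_pow_atTop (two_ne_zero)).atTop_div_const two_pos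
    have h0 : (-(2*(0:ℝ) + 2*0)) = 0 := by norm_num
    rw [h0] at h1
    refine (h1.comp hcomp).congr fun r => ?_
    simp only [Function.comp]
    have e1 : -(r ^ 2 / 2) = -r ^ 2 / 2 := by ring
    rw [e1]
    ring
  have := integral_Ioi_of_hasDerivAt_of_nonneg hcont hderiv hpos htend
  simpa using this

lemma relu_angular (θ : ℝ) (h0 : 0 ≤ θ) (hπ : θ ≤ π) :
    ∫ φ in Ioo (-π) π, relu (Real.cos φ) * relu (Real.cos θ * Real.cos φ + Real.sin θ * Real.sin φ)
      = (Real.sin θ + (π - θ) * Real.cos θ) / 2 := by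
  have pi_pos := Real.pi_pos
  have key : ∀ φ ∈ Ioo (-π) π,
      relu (Real.cos φ) * relu (Real.cos θ * Real.cos φ + Real.sin θ * Real.sin φ)
        = (Ioo (θ - π/2) (π/2)).indicator
            (fun φ => Real.cos φ * (Real.cos θ * Real.cos φ + Real.sin θ * Real.sin φ)) φ := by
    intro φ hφ
    by_cases hmem : φ ∈ Ioo (θ - π/2) (π/2)
    · rw [indicator_of_mem hmem]
      have h1 : 0 ≤ Real.cos φ :=
        (Real.cos_pos_of_mem_Ioo ⟨by linarith [hmem.1], hmem.2⟩).le
      have h2 : 0 ≤ Real.cos θ * Real.cos φ + Real.sin θ * Real.sin φ := by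
        rw [← Real.cos_sub]
        exact (Real.cos_pos_of_mem_Ioo ⟨by linarith [hmem.2], by linarith [hmem.1]⟩).le
      unfold relu
      rw [max_eq_right h1, max_eq_right h2]
    · rw [indicator_of_notMem hmem]
      rcases le_or_gt (Real.cos φ) 0 with h | h
      · unfold relu; rw [max_eq_left h, zero_mul]
      · have hlt : φ < π/2 := by
          by_contra hge
          push_neg at hge
          exact absurd (Real.cos_nonpos_of_pi_div_two_le_of_le hge (by linarith [hφ.2]))
            (not_le.mpr h)
        have hgt : -(π/2) < φ := by
          by_contra hge
          push_neg at hge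
          have : Real.cos (-φ) ≤ 0 :=
            Real.cos_nonpos_of_pi_div_two_le_of_le (by linarith) (by linarith [hφ.1])
          rw [Real.cos_neg] at this
          exact absurd this (not_le.mpr h)
        have hle : φ ≤ θ - π/2 := by
          by_contra hgt2
          push_neg at hgt2
          exact hmem ⟨hgt2, hlt⟩
        have h2 : Real.cos θ * Real.cos φ + Real.sin θ * Real.sin φ ≤ 0 := by
          rw [← Real.cos_sub]
          exact Real.cos_nonpos_of_pi_div_two_le_of_le (by linarith) (by linarith)
        unfold relu
        rw [max_eq_left h2, mul_zero]
  rw [setIntegral_congr_fun measurableSet_Ioo key,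
    setIntegral_indicator measurableSet_Ioo,
    inter_eq_self_of_subset_right (Ioo_subset_Ioo (by linarith) (by linarith))]
  have hab : θ - π/2 ≤ π/2 := by linarith
  rw [← MeasureTheory.integral_Ioc_eq_integral_Ioo, ← intervalIntegral.integral_of_le hab]
  have hderiv : ∀ x ∈ uIcc (θ - π/2) (π/2),
      HasDerivAt (fun φ => Real.cos θ * φ / 2 + Real.sin (2*φ - θ) / 4)
        (Real.cos x * (Real.cos θ * Real.cos x + Real.sin θ * Real.sin x)) x := by
    intro x _
    have hlin : HasDerivAt (fun φ : ℝ => 2*φ - θ) 2 x := by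
      simpa using ((hasDerivAt_id x).const_mul 2).sub_const θ
    have hsin : HasDerivAt (fun φ : ℝ => Real.sin (2*φ - θ)) (Real.cos (2*x - θ) * 2) x :=
      (Real.hasDerivAt_sin _).comp x hlin
    have hfst : HasDerivAt (fun φ : ℝ => Real.cos θ * φ / 2) (Real.cos θ / 2) x := by
      simpa using (((hasDerivAt_id x).const_mul (Real.cos θ)).div_const 2)
    have := hfst.add (hsin.div_const 4)
    refine this.congr_deriv ?_
    have hc2 : Real.cos (2*x - θ) = Real.cos (2*x) * Real.cos θ + Real.sin (2*x) * Real.sin θ :=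
      Real.cos_sub (2*x) θ
    rw [hc2, Real.cos_two_mul, Real.sin_two_mul]
    ring
  have hint : IntervalIntegrable
      (fun x => Real.cos x * (Real.cos θ * Real.cos x + Real.sin θ * Real.sin x))
      volume (θ - π/2) (π/2) :=
    (by continuity : Continuous fun x =>
      Real.cos x * (Real.cos θ * Real.cos x + Real.sin θ * Real.sin x)).intervalIntegrable _ _
  rw [intervalIntegral.integral_eq_sub_of_hasDerivAt hderiv hint]
  have e1 : Real.sin (2*(π/2) - θ) = Real.sin θ := by
    have : 2*(π/2) - θ = π - θ := by ring
    rw [this, Real.sin_pi_sub]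
  have e2 : Real.sin (2*(θ - π/2) - θ) = -Real.sin θ := by
    have : 2*(θ - π/2) - θ = -(π - θ) := by ring
    rw [this, Real.sin_neg, Real.sin_pi_sub]
  rw [e1, e2]
  ring

lemma gauss_prod_eq : (gaussianReal 0 1).prod (gaussianReal 0 1)
    = (volume : Measure (ℝ × ℝ)).withDensity
        (fun p => ENNReal.ofReal (gaussianPDFReal 0 1 p.1 * gaussianPDFReal 0 1 p.2)) := by
  have hγ : gaussianReal 0 1 = volume.withDensity (gaussianPDF 0 1) :=
    gaussianReal_of_var_ne_zero 0 one_ne_zero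
  refine Measure.prod_eq fun s t hs ht => ?_
  rw [Measure.volume_eq_prod, withDensity_apply _ (hs.prod ht), ← Measure.prod_restrict]
  have hsplit : (fun p : ℝ × ℝ => ENNReal.ofReal (gaussianPDFReal 0 1 p.1 * gaussianPDFReal 0 1 p.2))
      = fun p : ℝ × ℝ => ENNReal.ofReal (gaussianPDFReal 0 1 p.1)
          * ENNReal.ofReal (gaussianPDFReal 0 1 p.2) :=
    funext fun p => ENNReal.ofReal_mul (gaussianPDFReal_nonneg 0 1 p.1)
  rw [hsplit]
  rw [lintegral_prod_mul
    ((measurable_gaussianPDFReal 0 1).ennreal_ofReal).aemeasurable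
    ((measurable_gaussianPDFReal 0 1).ennreal_ofReal).aemeasurable]
  rw [hγ]
  rw [← withDensity_apply _ hs, ← withDensity_apply _ ht]
  rfl

/-- **Arc-cosine kernel of degree 1**: for a centered bivariate Gaussian `(Z_x, Z_y)`
with `E[Z_x²] = E[Z_y²] = 1` and `E[Z_x Z_y] = cos θ`,
`E[σ(Z_x) σ(Z_y)] = (1/2π)(sin θ + (π − θ) cos θ)`. -/
theorem relu_gaussian_expectation (θ : ℝ) (hθ : θ ∈ Set.Icc 0 Real.pi)
    {Ω : Type*} [MeasurableSpace Ω] (P : Measure Ω) [IsProbabilityMeasure P]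
    (Z : Ω → ℝ × ℝ) (hZ : Measure.map Z P = stdBivariateGaussian θ) :
    ∫ ω, relu (Z ω).1 * relu (Z ω).2 ∂P
      = (1 / (2 * Real.pi)) * (Real.sin θ + (Real.pi - θ) * Real.cos θ) := by
  obtain ⟨hθ0, hθπ⟩ := hθ
  have pi_pos := Real.pi_pos
  have hf : Continuous fun p : ℝ × ℝ => relu p.1 * relu p.2 :=
    (continuous_relu.comp continuous_fst).mul (continuous_relu.comp continuous_snd)
  have hL : Measurable fun p : ℝ × ℝ => (p.1, Real.cos θ * p.1 + Real.sin θ * p.2) :=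
    measurable_fst.prodMk ((measurable_const.mul measurable_fst).add
      (measurable_const.mul measurable_snd))
  have hZm : AEMeasurable Z P := by
    by_contra h
    have h0 : stdBivariateGaussian θ = 0 := by
      rw [← hZ, Measure.map_of_not_aemeasurable h]
    have h1 : stdBivariateGaussian θ univ = 1 := by
      rw [stdBivariateGaussian, Measure.map_apply hL MeasurableSet.univ, preimage_univ]
      simp
    rw [h0] at h1
    simp at h1
  have step1 : ∫ ω, relu (Z ω).1 * relu (Z ω).2 ∂P
      = ∫ q : ℝ × ℝ, relu q.1 * relu (Real.cos θ * q.1 + Real.sin θ * q.2)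
          ∂((gaussianReal 0 1).prod (gaussianReal 0 1)) := by
    rw [← integral_map hZm hf.aestronglyMeasurable, hZ, stdBivariateGaussian,
      integral_map hL.aemeasurable hf.aestronglyMeasurable]
  rw [step1]
  have hnnmeas : Measurable fun p : ℝ × ℝ =>
      (gaussianPDFReal 0 1 p.1 * gaussianPDFReal 0 1 p.2).toNNReal :=
    (((measurable_gaussianPDFReal 0 1).comp measurable_fst).mul
      ((measurable_gaussianPDFReal 0 1).comp measurable_snd)).real_toNNReal
  have step2 : ∫ q : ℝ × ℝ, relu q.1 * relu (Real.cos θ * q.1 + Real.sin θ * q.2)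
          ∂((gaussianReal 0 1).prod (gaussianReal 0 1))
      = ∫ p : ℝ × ℝ, (gaussianPDFReal 0 1 p.1 * gaussianPDFReal 0 1 p.2)
          * (relu p.1 * relu (Real.cos θ * p.1 + Real.sin θ * p.2)) := by
    rw [gauss_prod_eq]
    rw [show (fun p : ℝ × ℝ =>
        ENNReal.ofReal (gaussianPDFReal 0 1 p.1 * gaussianPDFReal 0 1 p.2))
      = fun p : ℝ × ℝ =>
        ((gaussianPDFReal 0 1 p.1 * gaussianPDFReal 0 1 p.2).toNNReal : ℝ≥0∞) from rfl]
    rw [integral_withDensity_eq_integral_smul hnnmeas]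
    congr 1
    funext p
    rw [NNReal.smul_def, Real.coe_toNNReal _
      (mul_nonneg (gaussianPDFReal_nonneg 0 1 p.1) (gaussianPDFReal_nonneg 0 1 p.2)),
      smul_eq_mul]
  rw [step2]
  rw [← integral_comp_polarCoord_symm]
  rw [polarCoord_target, Measure.volume_eq_prod]
  have hEq : EqOn
      (fun p : ℝ × ℝ => p.1 • ((fun q : ℝ × ℝ =>
        (gaussianPDFReal 0 1 q.1 * gaussianPDFReal 0 1 q.2)
          * (relu q.1 * relu (Real.cos θ * q.1 + Real.sin θ * q.2))) (polarCoord.symm p)))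
      (fun p : ℝ × ℝ => (fun r : ℝ => r ^ 3 * Real.exp (-r ^ 2 / 2)) p.1
        * (fun φ : ℝ => (2 * π)⁻¹ *
            (relu (Real.cos φ) * relu (Real.cos θ * Real.cos φ + Real.sin θ * Real.sin φ))) p.2)
      (Ioi 0 ×ˢ Ioo (-π) π) := by
    intro p hp
    have hr : (0:ℝ) ≤ p.1 := le_of_lt hp.1
    simp only [polarCoord_symm_apply, gaussianPDFReal, NNReal.coe_one, mul_one, sub_zero]
    have hA : (Real.sqrt (2*π))⁻¹ * (Real.sqrt (2*π))⁻¹ = (2*π)⁻¹ := by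
      rw [← mul_inv, Real.mul_self_sqrt (by positivity)]
    have hsq : (p.1 * Real.cos p.2) ^ 2 + (p.1 * Real.sin p.2) ^ 2 = p.1 ^ 2 := by
      have h2 := Real.sin_sq_add_cos_sq p.2
      linear_combination p.1 ^ 2 * h2
    have hE : Real.exp (-(p.1 * Real.cos p.2) ^ 2 / 2) * Real.exp (-(p.1 * Real.sin p.2) ^ 2 / 2)
        = Real.exp (-p.1 ^ 2 / 2) := by
      rw [← Real.exp_add]
      congr 1
      linear_combination (-(1:ℝ)/2) * hsq
    have harg : Real.cos θ * (p.1 * Real.cos p.2) + Real.sin θ * (p.1 * Real.sin p.2)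
        = p.1 * (Real.cos θ * Real.cos p.2 + Real.sin θ * Real.sin p.2) := by ring
    rw [harg, relu_const_mul _ _ hr, relu_const_mul _ _ hr, smul_eq_mul, ← hA, ← hE]
    ring
  rw [setIntegral_congr_fun (measurableSet_Ioi.prod measurableSet_Ioo) hEq]
  rw [setIntegral_prod_mul (μ := (volume : Measure ℝ)) (ν := (volume : Measure ℝ))
    (fun r : ℝ => r ^ 3 * Real.exp (-r ^ 2 / 2))
    (fun φ : ℝ => (2 * π)⁻¹ *
      (relu (Real.cos φ) * relu (Real.cos θ * Real.cos φ + Real.sin θ * Real.sin φ)))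
    (Ioi 0) (Ioo (-π) π)]
  rw [relu_radial, integral_const_mul, relu_angular θ hθ0 hθπ]
  field_simp
end

section
/- Let (W_i)_{i≥1} be a sequence of square-integrable real random variables that is conditionally iid given a sub-σ-algebra G, and set M = E[W₁ | G]. Then for every m ≥ 1, every unit vector x̂ ∈ ℝ^m, and every real number c, E[σ(c·M) · σ(Σ_{i=1}^m (W_i − M) x̂_i)] ≤ |c| · √(E[M²]) · √(E[W₁²] − E[M²]), and moreover E[M²] = E[W₁ W₂], so the bound equals |c| · √(E[W₁W₂]) · √(E[W₁²] − E[W₁W₂]). -/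
open MeasureTheory ProbabilityTheory

/-- A sequence of real random variables is conditionally IID given the sub-σ-algebra `G`:
conditionally on `G` the variables are independent, and they all have the same
conditional distribution given `G`. -/
def CondIID {Ω : Type*} (G : MeasurableSpace Ω) {mΩ : MeasurableSpace Ω}
    [StandardBorelSpace Ω] (hG : G ≤ mΩ) (P : Measure Ω) [IsFiniteMeasure P]
    (W : ℕ → Ω → ℝ) : Prop :=
  iCondIndepFun G hG W P ∧
  ∀ i, ∀ s : Set ℝ, MeasurableSet s →
    (P[(W i ⁻¹' s).indicator (fun _ => (1 : ℝ))|G]) =ᵐ[P]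
      (P[(W 0 ⁻¹' s).indicator (fun _ => (1 : ℝ))|G])

section Aux

variable {Ω : Type*} {G : MeasurableSpace Ω} {mΩ : MeasurableSpace Ω}
  {P : Measure Ω} [IsProbabilityMeasure P]

lemma relu_nonneg' (z : ℝ) : 0 ≤ relu z := le_max_left _ _

lemma relu_le_abs' (z : ℝ) : relu z ≤ |z| := max_le (abs_nonneg z) (le_abs_self z)

omit [IsProbabilityMeasure P] in
lemma integrable_mul_of_memL2 {f g : Ω → ℝ} (hf : MemLp f 2 P) (hg : MemLp g 2 P) :
    Integrable (fun ω => f ω * g ω) P := by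
  refine Integrable.mono ((hf.integrable_sq.add hg.integrable_sq).const_mul 2⁻¹)
    (hf.aestronglyMeasurable.mul hg.aestronglyMeasurable)
    (Filter.Eventually.of_forall fun ω => ?_)
  simp only [Real.norm_eq_abs]
  have h1 : |f ω * g ω| ≤ 2⁻¹ * (f ω ^ 2 + g ω ^ 2) := by
    rw [abs_mul]
    nlinarith [sq_nonneg (|f ω| - |g ω|), sq_abs (f ω), sq_abs (g ω), abs_nonneg (f ω),
      abs_nonneg (g ω)]
  refine h1.trans (le_abs_self _)

lemma memL2_condexp (hG : G ≤ mΩ) {f : Ω → ℝ} (hf : MemLp f 2 P) :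
    MemLp (P[f|G]) 2 P := by
  haveI := isFiniteMeasure_trim (μ := P) hG
  set g : Lp ℝ 2 P := (condExpL2 ℝ ℝ hG (hf.toLp f) : Lp ℝ 2 P) with hg
  have h1 : (g : Ω → ℝ) =ᵐ[P] P[f|G] := by
    refine ae_eq_condExp_of_forall_setIntegral_eq hG (hf.integrable one_le_two) ?_ ?_ ?_
    · intro s hs hμs
      exact ((Lp.memLp g).integrable one_le_two).integrableOn
    · intro s hs hμs
      rw [hg]
      rw [integral_condExpL2_eq hG (hf.toLp f) hs hμs.ne]
      exact setIntegral_congr_ae (hG s hs) ((hf.coeFn_toLp).mono fun x hx _ => hx)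
    · exact aestronglyMeasurable_condExpL2 hG _
  exact (Lp.memLp g).ae_eq h1

variable [StandardBorelSpace Ω]

lemma ae_indepFun_of_condIndepFun (hG : G ≤ mΩ) {f g : Ω → ℝ}
    (hf : Measurable f) (hg : Measurable g)
    (h : CondIndepFun G hG f g P) :
    ∀ᵐ ω ∂P, IndepFun f g (condExpKernel P G ω) := by
  have h' : ProbabilityTheory.Kernel.IndepFun f g (condExpKernel P G) (P.trim hG) := h
  have h2 := Kernel.indepFun_iff_measure_inter_preimage_eq_mul.mp h'
  have h3 : ∀ᵐ ω ∂(P.trim hG), ∀ q r : ℚ,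
      condExpKernel P G ω (f ⁻¹' Set.Iic (q : ℝ) ∩ g ⁻¹' Set.Iic (r : ℝ))
        = condExpKernel P G ω (f ⁻¹' Set.Iic (q : ℝ)) *
            condExpKernel P G ω (g ⁻¹' Set.Iic (r : ℝ)) := by
    rw [ae_all_iff]
    intro q
    rw [ae_all_iff]
    intro r
    exact h2 _ _ measurableSet_Iic measurableSet_Iic
  have h4 := ae_of_ae_trim hG h3
  filter_upwards [h4] with ω hω
  rw [IndepFun_iff_Indep]
  have hgen : ∀ φ : Ω → ℝ, MeasurableSpace.comap φ (inferInstance : MeasurableSpace ℝ)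
      = MeasurableSpace.generateFrom ((Set.preimage φ) '' (⋃ q : ℚ, {Set.Iic (q : ℝ)})) := by
    intro φ
    rw [BorelSpace.measurable_eq (α := ℝ), Real.borel_eq_generateFrom_Iic_rat,
      MeasurableSpace.comap_generateFrom]
  refine IndepSets.indep hf.comap_le hg.comap_le
    (Real.isPiSystem_Iic_rat.comap f) (Real.isPiSystem_Iic_rat.comap g)
    (hgen f) (hgen g) ?_
  rintro t1 t2 ⟨s1, hs1, rfl⟩ ⟨s2, hs2, rfl⟩
  simp only [Set.mem_iUnion, Set.mem_singleton_iff] at hs1 hs2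
  obtain ⟨q, rfl⟩ := hs1
  obtain ⟨r, rfl⟩ := hs2
  exact Filter.Eventually.of_forall fun _ => hω q r

end Aux

/-- For a conditionally IID sequence with conditional mean `M = E[W₁|G]`,
`E[σ(c·M) σ(Σᵢ (Wᵢ − M) x̂ᵢ)] ≤ |c| √(E[M²]) √(E[W₁²] − E[M²])`, and moreover
`E[M²] = E[W₁W₂]`, so the bound equals `|c| √(E[W₁W₂]) √(E[W₁²] − E[W₁W₂])`. -/
theorem relu_condmean_cross_bound {Ω : Type*} (G : MeasurableSpace Ω)
    {mΩ : MeasurableSpace Ω} [StandardBorelSpace Ω] (hG : G ≤ mΩ)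
    (P : Measure Ω) [IsProbabilityMeasure P]
    (W : ℕ → Ω → ℝ) (hWmeas : ∀ i, Measurable (W i)) (hL2 : ∀ i, MemLp (W i) 2 P)
    (hiid : CondIID G hG P W)
    (m : ℕ) (hm : 1 ≤ m) (x : Fin m → ℝ) (hx : ∑ i, x i ^ 2 = 1) (c : ℝ) :
    (∫ ω, relu (c * (P[W 0|G]) ω) *
        relu (∑ i : Fin m, (W i ω - (P[W 0|G]) ω) * x i) ∂P
      ≤ |c| * Real.sqrt (∫ ω, ((P[W 0|G]) ω) ^ 2 ∂P) *
          Real.sqrt ((∫ ω, (W 0 ω) ^ 2 ∂P) - ∫ ω, ((P[W 0|G]) ω) ^ 2 ∂P)) ∧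
    (∫ ω, ((P[W 0|G]) ω) ^ 2 ∂P = ∫ ω, W 0 ω * W 1 ω ∂P) ∧
    (∫ ω, relu (c * (P[W 0|G]) ω) *
        relu (∑ i : Fin m, (W i ω - (P[W 0|G]) ω) * x i) ∂P
      ≤ |c| * Real.sqrt (∫ ω, W 0 ω * W 1 ω ∂P) *
          Real.sqrt ((∫ ω, (W 0 ω) ^ 2 ∂P) - ∫ ω, W 0 ω * W 1 ω ∂P)) := by
  haveI := isFiniteMeasure_trim (μ := P) hG
  set M : Ω → ℝ := P[W 0|G] with hM
  have hWint : ∀ i, Integrable (W i) P := fun i => (hL2 i).integrable one_le_two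
  have hM2 : MemLp M 2 P := memL2_condexp hG (hL2 0)
  have hMint : Integrable M P := hM2.integrable one_le_two
  have hMsm : StronglyMeasurable[G] M := stronglyMeasurable_condExp
  have hMmeas : Measurable M := (hMsm.mono hG).measurable
  set I2 : ℝ := ∫ ω, M ω ^ 2 ∂P with hI2
  set A : ℝ := ∫ ω, W 0 ω ^ 2 ∂P with hA
  -- equality of laws on G-restricted sets
  have hmap : ∀ (i : ℕ) (s : Set Ω), MeasurableSet[G] s →
      (P.restrict s).map (W i) = (P.restrict s).map (W 0) := by
    intro i s hs
    refine Measure.ext fun t ht => ?_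
    rw [Measure.map_apply (hWmeas i) ht, Measure.map_apply (hWmeas 0) ht]
    have hint : ∀ j : ℕ, Integrable ((W j ⁻¹' t).indicator (fun _ => (1 : ℝ))) P :=
      fun j => (integrable_const (1 : ℝ)).indicator ((hWmeas j) ht)
    have e1 : ∫ ω in s, ((W i ⁻¹' t).indicator (fun _ => (1 : ℝ))) ω ∂P
        = ∫ ω in s, ((W 0 ⁻¹' t).indicator (fun _ => (1 : ℝ))) ω ∂P := by
      rw [← setIntegral_condExp hG (hint i) hs, ← setIntegral_condExp hG (hint 0) hs]
      exact setIntegral_congr_ae (hG s hs) ((hiid.2 i t ht).mono fun ω hω _ => hω)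
    have e2 : ∀ j : ℕ, ∫ ω in s, ((W j ⁻¹' t).indicator (fun _ => (1 : ℝ))) ω ∂P
        = ((P.restrict s) (W j ⁻¹' t)).toReal := by
      intro j
      rw [integral_indicator ((hWmeas j) ht), setIntegral_const, smul_eq_mul, mul_one, measureReal_def]
    rw [e2 i, e2 0] at e1
    exact (ENNReal.toReal_eq_toReal_iff' (measure_ne_top _ _) (measure_ne_top _ _)).mp e1
  -- the conditional expectations agree
  have hcond : ∀ i : ℕ, P[W i|G] =ᵐ[P] M := by
    intro i
    refine ae_eq_condExp_of_forall_setIntegral_eq hG (hWint 0)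
      (fun s hs _ => integrable_condExp.integrableOn) (fun s hs hμs => ?_)
      stronglyMeasurable_condExp.aestronglyMeasurable
    rw [setIntegral_condExp hG (hWint i) hs]
    have e1 : ∫ ω in s, W i ω ∂P = ∫ y, y ∂((P.restrict s).map (W i)) :=
      (integral_map (hWmeas i).aemeasurable aestronglyMeasurable_id).symm
    have e0 : ∫ ω in s, W 0 ω ∂P = ∫ y, y ∂((P.restrict s).map (W 0)) :=
      (integral_map (hWmeas 0).aemeasurable aestronglyMeasurable_id).symm
    rw [e1, hmap i s hs, ← e0]
  -- equal second moments
  have hlaw : ∀ i : ℕ, P.map (W i) = P.map (W 0) := by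
    intro i
    have := hmap i Set.univ MeasurableSet.univ
    simpa [Measure.restrict_univ] using this
  have hsq : ∀ i : ℕ, ∫ ω, W i ω ^ 2 ∂P = A := by
    intro i
    have h1 : ∫ ω, W i ω ^ 2 ∂P = ∫ y, y ^ 2 ∂(P.map (W i)) :=
      (integral_map (hWmeas i).aemeasurable
        (measurable_id.pow_const 2).aestronglyMeasurable).symm
    have h0 : A = ∫ y, y ^ 2 ∂(P.map (W 0)) :=
      (integral_map (hWmeas 0).aemeasurable
        (measurable_id.pow_const 2).aestronglyMeasurable).symm
    rw [h1, hlaw i, ← h0]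
  -- product of distinct variables
  have hprod : ∀ i j : ℕ, i ≠ j → ∫ ω, W i ω * W j ω ∂P = I2 := by
    intro i j hij
    have hint_ij : Integrable (fun ω => W i ω * W j ω) P :=
      integrable_mul_of_memL2 (hL2 i) (hL2 j)
    have hker := ae_indepFun_of_condIndepFun hG (hWmeas i) (hWmeas j)
      (hiid.1.condIndepFun hij)
    have h1 : P[fun ω => W i ω * W j ω|G] =ᵐ[P]
        fun ω => ∫ y, W i y * W j y ∂(condExpKernel P G ω) :=
      condExp_ae_eq_integral_condExpKernel hG hint_ij
    have h2 : P[W i|G] =ᵐ[P] fun ω => ∫ y, W i y ∂(condExpKernel P G ω) :=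
      condExp_ae_eq_integral_condExpKernel hG (hWint i)
    have h3 : P[W j|G] =ᵐ[P] fun ω => ∫ y, W j y ∂(condExpKernel P G ω) :=
      condExp_ae_eq_integral_condExpKernel hG (hWint j)
    have h4 : P[fun ω => W i ω * W j ω|G] =ᵐ[P] fun ω => M ω ^ 2 := by
      filter_upwards [h1, h2, h3, hker, hcond i, hcond j] with ω e1 e2 e3 eind ei ej
      rw [e1, eind.integral_fun_mul_eq_mul_integral (hWmeas i).aestronglyMeasurable
        (hWmeas j).aestronglyMeasurable, ← e2, ← e3, ei, ej, sq]
    calc ∫ ω, W i ω * W j ω ∂P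
        = ∫ ω, (P[fun ω => W i ω * W j ω|G]) ω ∂P := (integral_condExp hG).symm
      _ = ∫ ω, M ω ^ 2 ∂P := integral_congr_ae h4
  -- E[W i * M] = I2
  have hWM : ∀ i : ℕ, ∫ ω, W i ω * M ω ∂P = I2 := by
    intro i
    have hint_i : Integrable (M * W i) P := integrable_mul_of_memL2 hM2 (hL2 i)
    have h1 : P[M * W i|G] =ᵐ[P] M * P[W i|G] :=
      condExp_mul_of_stronglyMeasurable_left hMsm hint_i (hWint i)
    have h2 : P[M * W i|G] =ᵐ[P] fun ω => M ω ^ 2 := by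
      filter_upwards [h1, hcond i] with ω e1 ei
      rw [e1]
      simp only [Pi.mul_apply]
      rw [ei, sq]
    calc ∫ ω, W i ω * M ω ∂P = ∫ ω, (M * W i) ω ∂P := by
          simp only [Pi.mul_apply]
          exact integral_congr_ae (Filter.Eventually.of_forall fun ω => mul_comm _ _)
      _ = ∫ ω, (P[M * W i|G]) ω ∂P := (integral_condExp hG).symm
      _ = I2 := integral_congr_ae h2
  -- centered second moments
  have hcross : ∀ i j : ℕ, i ≠ j →
      ∫ ω, (W i ω - M ω) * (W j ω - M ω) ∂P = 0 := by
    intro i j hij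
    have e : ∀ ω, (W i ω - M ω) * (W j ω - M ω)
        = W i ω * W j ω - W i ω * M ω - W j ω * M ω + M ω ^ 2 := by intro ω; ring
    have ia : Integrable (fun ω => W i ω * W j ω - W i ω * M ω) P := by
      exact (integrable_mul_of_memL2 (hL2 i) (hL2 j)).sub
        (integrable_mul_of_memL2 (hL2 i) hM2)
    have ib : Integrable (fun ω => W i ω * W j ω - W i ω * M ω - W j ω * M ω) P := by
      exact ia.sub (integrable_mul_of_memL2 (hL2 j) hM2)
    simp_rw [e]
    rw [integral_add ib hM2.integrable_sq,
      integral_sub ia (integrable_mul_of_memL2 (hL2 j) hM2),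
      integral_sub (integrable_mul_of_memL2 (hL2 i) (hL2 j))
        (integrable_mul_of_memL2 (hL2 i) hM2),
      hprod i j hij, hWM i, hWM j]
    simp [hI2]
  have hdiag : ∀ i : ℕ, ∫ ω, (W i ω - M ω) * (W i ω - M ω) ∂P = A - I2 := by
    intro i
    have e : ∀ ω, (W i ω - M ω) * (W i ω - M ω)
        = W i ω ^ 2 - W i ω * M ω - W i ω * M ω + M ω ^ 2 := by intro ω; ring
    have ia : Integrable (fun ω => W i ω ^ 2 - W i ω * M ω) P := by
      exact (hL2 i).integrable_sq.sub (integrable_mul_of_memL2 (hL2 i) hM2)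
    have ib : Integrable (fun ω => W i ω ^ 2 - W i ω * M ω - W i ω * M ω) P := by
      exact ia.sub (integrable_mul_of_memL2 (hL2 i) hM2)
    simp_rw [e]
    rw [integral_add ib hM2.integrable_sq,
      integral_sub ia (integrable_mul_of_memL2 (hL2 i) hM2),
      integral_sub (hL2 i).integrable_sq (integrable_mul_of_memL2 (hL2 i) hM2),
      hsq i, hWM i]
    simp only [hI2]
    ring
  -- Y and S
  have hYmem : ∀ i : Fin m, MemLp (fun ω => (W (i : ℕ) ω - M ω) * x i) 2 P := by
    intro i
    refine MemLp.ae_eq (Filter.Eventually.of_forall fun ω => mul_comm (x i) _) ?_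
    exact ((hL2 i).sub hM2).const_mul (x i)
  have hSmem : MemLp (fun ω => ∑ i : Fin m, (W (i : ℕ) ω - M ω) * x i) 2 P :=
    memLp_finsetSum Finset.univ (fun i _ => hYmem i)
  have hSmeas : Measurable (fun ω => ∑ i : Fin m, (W (i : ℕ) ω - M ω) * x i) :=
    Finset.measurable_sum Finset.univ (fun i _ => ((hWmeas i).sub hMmeas).mul_const (x i))
  have hS2 : ∫ ω, (∑ i : Fin m, (W (i : ℕ) ω - M ω) * x i) ^ 2 ∂P = A - I2 := by
    have expand : ∀ ω : Ω, (∑ i : Fin m, (W (i : ℕ) ω - M ω) * x i) ^ 2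
        = ∑ i : Fin m, ∑ j : Fin m,
            ((W (i : ℕ) ω - M ω) * x i) * ((W (j : ℕ) ω - M ω) * x j) := by
      intro ω
      rw [sq, Finset.sum_mul_sum]
    simp_rw [expand]
    rw [integral_finset_sum _ (fun i _ => integrable_finset_sum _
      (fun j _ => integrable_mul_of_memL2 (hYmem i) (hYmem j)))]
    have hinner : ∀ i : Fin m, ∫ ω, ∑ j : Fin m,
        ((W (i : ℕ) ω - M ω) * x i) * ((W (j : ℕ) ω - M ω) * x j) ∂P
        = ∑ j : Fin m, ∫ ω, ((W (i : ℕ) ω - M ω) * x i) * ((W (j : ℕ) ω - M ω) * x j) ∂P :=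
      fun i => integral_finset_sum _ (fun j _ => integrable_mul_of_memL2 (hYmem i) (hYmem j))
    rw [Finset.sum_congr rfl fun i _ => hinner i]
    have hIJ : ∀ i j : Fin m, ∫ ω, ((W (i : ℕ) ω - M ω) * x i) * ((W (j : ℕ) ω - M ω) * x j) ∂P
        = x i * x j * (if i = j then A - I2 else 0) := by
      intro i j
      have e : ∀ ω, ((W (i : ℕ) ω - M ω) * x i) * ((W (j : ℕ) ω - M ω) * x j)
          = ((W (i : ℕ) ω - M ω) * (W (j : ℕ) ω - M ω)) * (x i * x j) := by intro ω; ring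
      simp_rw [e]
      rw [integral_mul_const]
      by_cases h : i = j
      · subst h
        rw [if_pos rfl, hdiag (i : ℕ)]
        ring
      · have hne : (i : ℕ) ≠ (j : ℕ) := fun hc => h (Fin.ext hc)
        rw [if_neg h, hcross _ _ hne]
        ring
    rw [Finset.sum_congr rfl fun i _ => Finset.sum_congr rfl fun j _ => hIJ i j]
    have hrow : ∀ i : Fin m, ∑ j : Fin m, x i * x j * (if i = j then A - I2 else 0)
        = x i ^ 2 * (A - I2) := by
      intro i
      rw [Finset.sum_eq_single i]
      · rw [if_pos rfl]; ring
      · intro j _ hj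
        rw [if_neg (fun hc => hj hc.symm), mul_zero]
      · intro h; exact absurd (Finset.mem_univ i) h
    rw [Finset.sum_congr rfl fun i _ => hrow i, ← Finset.sum_mul, hx, one_mul]
  have hAI : 0 ≤ A - I2 := by
    rw [← hS2]
    exact integral_nonneg fun ω => sq_nonneg _
  -- the main bound
  have key : ∫ ω, relu (c * M ω) * relu (∑ i : Fin m, (W (i : ℕ) ω - M ω) * x i) ∂P
      ≤ |c| * Real.sqrt I2 * Real.sqrt (A - I2) := by
    have habs_int : Integrable (fun ω => |c| * (|M ω| *
        |∑ i : Fin m, (W (i : ℕ) ω - M ω) * x i|)) P := by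
      refine Integrable.const_mul ?_ |c|
      exact integrable_mul_of_memL2 (by exact hM2.abs) (by exact hSmem.abs)
    have hbound : ∀ ω, relu (c * M ω) * relu (∑ i : Fin m, (W (i : ℕ) ω - M ω) * x i)
        ≤ |c| * (|M ω| * |∑ i : Fin m, (W (i : ℕ) ω - M ω) * x i|) := by
      intro ω
      have h1 : relu (c * M ω) * relu (∑ i : Fin m, (W (i : ℕ) ω - M ω) * x i)
          ≤ |c * M ω| * |∑ i : Fin m, (W (i : ℕ) ω - M ω) * x i| :=
        mul_le_mul (relu_le_abs' _) (relu_le_abs' _) (relu_nonneg' _) (abs_nonneg _)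
      calc relu (c * M ω) * relu (∑ i : Fin m, (W (i : ℕ) ω - M ω) * x i)
          ≤ |c * M ω| * |∑ i : Fin m, (W (i : ℕ) ω - M ω) * x i| := h1
        _ = |c| * (|M ω| * |∑ i : Fin m, (W (i : ℕ) ω - M ω) * x i|) := by
            rw [abs_mul]; ring
    have hrelu_int : Integrable (fun ω => relu (c * M ω) *
        relu (∑ i : Fin m, (W (i : ℕ) ω - M ω) * x i)) P := by
      refine Integrable.mono habs_int ?_ (Filter.Eventually.of_forall fun ω => ?_)
      · have m1 : Measurable (fun ω => relu (c * M ω)) := by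
          simp only [relu]
          exact measurable_const.max (hMmeas.const_mul c)
        have m2 : Measurable (fun ω => relu (∑ i : Fin m, (W (i : ℕ) ω - M ω) * x i)) := by
          simp only [relu]
          exact measurable_const.max hSmeas
        exact (m1.mul m2).aestronglyMeasurable
      · simp only [Real.norm_eq_abs]
        rw [abs_of_nonneg (mul_nonneg (relu_nonneg' _) (relu_nonneg' _))]
        exact (hbound ω).trans (le_abs_self _)
    have step1 : ∫ ω, relu (c * M ω) * relu (∑ i : Fin m, (W (i : ℕ) ω - M ω) * x i) ∂P
        ≤ ∫ ω, |c| * (|M ω| * |∑ i : Fin m, (W (i : ℕ) ω - M ω) * x i|) ∂P :=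
      integral_mono hrelu_int habs_int hbound
    have step2 : ∫ ω, |c| * (|M ω| * |∑ i : Fin m, (W (i : ℕ) ω - M ω) * x i|) ∂P
        = |c| * ∫ ω, |M ω| * |∑ i : Fin m, (W (i : ℕ) ω - M ω) * x i| ∂P :=
      integral_const_mul _ _
    have hconj : Real.HolderConjugate 2 2 := Real.HolderConjugate.two_two
    have hM2' : MemLp (fun ω => |M ω|) (ENNReal.ofReal 2) P := by
      rw [ENNReal.ofReal_ofNat]
      exact hM2.abs
    have hS2' : MemLp (fun ω => |∑ i : Fin m, (W (i : ℕ) ω - M ω) * x i|)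
        (ENNReal.ofReal 2) P := by
      rw [ENNReal.ofReal_ofNat]
      exact hSmem.abs
    have step3 := integral_mul_le_Lp_mul_Lq_of_nonneg hconj
      (Filter.Eventually.of_forall fun ω => abs_nonneg (M ω))
      (Filter.Eventually.of_forall fun ω => abs_nonneg _) hM2' hS2'
    have e1 : ∫ ω, |M ω| ^ (2 : ℝ) ∂P = I2 := by
      have : ∀ ω, |M ω| ^ (2 : ℝ) = M ω ^ 2 := by
        intro ω
        rw [show (2 : ℝ) = ((2 : ℕ) : ℝ) by norm_num, Real.rpow_natCast, sq_abs]
      simp_rw [this]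
      rfl
    have e2 : ∫ ω, |∑ i : Fin m, (W (i : ℕ) ω - M ω) * x i| ^ (2 : ℝ) ∂P = A - I2 := by
      have : ∀ ω, |∑ i : Fin m, (W (i : ℕ) ω - M ω) * x i| ^ (2 : ℝ)
          = (∑ i : Fin m, (W (i : ℕ) ω - M ω) * x i) ^ 2 := by
        intro ω
        rw [show (2 : ℝ) = ((2 : ℕ) : ℝ) by norm_num, Real.rpow_natCast, sq_abs]
      simp_rw [this]
      exact hS2
    rw [e1, e2] at step3
    calc ∫ ω, relu (c * M ω) * relu (∑ i : Fin m, (W (i : ℕ) ω - M ω) * x i) ∂P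
        ≤ |c| * ∫ ω, |M ω| * |∑ i : Fin m, (W (i : ℕ) ω - M ω) * x i| ∂P := by
          rw [← step2]; exact step1
      _ ≤ |c| * (I2 ^ (1 / (2 : ℝ)) * (A - I2) ^ (1 / (2 : ℝ))) := by
          exact mul_le_mul_of_nonneg_left step3 (abs_nonneg c)
      _ = |c| * Real.sqrt I2 * Real.sqrt (A - I2) := by
          rw [Real.sqrt_eq_rpow, Real.sqrt_eq_rpow]
          ring
  have h01 : ∫ ω, W 0 ω * W 1 ω ∂P = I2 := hprod 0 1 (by norm_num)
  refine ⟨key, h01.symm, ?_⟩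
  rw [h01]
  exact key
end
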